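/- Let k ≥ 3 and n ≥ 1. A U-cycle for the set of surjective words of length n over a k-letter alphabet (onto functions from Fin n to Fin k, i.e., n-letter words containing every letter of the alphabet) exists if and only if n > k. -/

import Mathlib

/-- A U-cycle for a finite set `S` of `n`-letter words over the alphabet `Fin k`. -/
def IsUCycle {n k : ℕ} (S : Finset (Fin n → Fin k)) (s : ZMod S.card → Fin k) : Prop :=
  Set.BijOn (fun i : ZMod S.card => fun j : Fin n => s (i + ((j : ℕ) : ZMod S.card)))
    Set.univ ↑S

namespace UC

set_option linter.unusedSectionVars false
set_option linter.unreachableTactic false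
set_option linter.unusedTactic false

variable {n k : ℕ}

/-- `f` can follow `e` in a de Bruijn-style overlap. -/
def Shifts (e f : Fin n → Fin k) : Prop :=
  ∀ (i : ℕ) (h : i + 1 < n), e ⟨i+1, h⟩ = f ⟨i, Nat.lt_of_succ_lt h⟩

abbrev T (n k : ℕ) := {w : Fin n → Fin k // Function.Surjective w}

def Rel (a b : T n k) : Prop := Shifts a.1 b.1

def Reach : T n k → T n k → Prop := Relation.ReflTransGen Rel

def Conn (a b : T n k) : Prop := Reach a b ∧ Reach b a

theorem Conn.refl (a : T n k) : Conn a a := ⟨.refl, .refl⟩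

theorem Conn.symm {a b : T n k} (h : Conn a b) : Conn b a := ⟨h.2, h.1⟩

theorem Conn.trans {a b c : T n k} (h : Conn a b) (h' : Conn b c) : Conn a c :=
  ⟨h.1.trans h'.1, h'.2.trans h.2⟩

theorem reach_of_eq {a b : T n k} (h : a = b) : Reach a b := h ▸ .refl

theorem conn_of_eq {a b : T n k} (h : a = b) : Conn a b := ⟨reach_of_eq h, reach_of_eq h.symm⟩

/-- rotate left by `m`. -/
def rotm (hn : 0 < n) (m : ℕ) (e : Fin n → Fin k) : Fin n → Fin k :=
  fun j => e ⟨(j.val + m) % n, Nat.mod_lt _ hn⟩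

theorem rotm_zero (hn : 0 < n) (e : Fin n → Fin k) : rotm hn 0 e = e := by
  funext j; simp [rotm, Nat.mod_eq_of_lt j.isLt]

theorem rotm_rotm (hn : 0 < n) (a b : ℕ) (e : Fin n → Fin k) :
    rotm hn a (rotm hn b e) = rotm hn (b + a) e := by
  funext j
  simp only [rotm]
  congr 1
  apply Fin.ext
  show ((j.val + a) % n + b) % n = (j.val + (b + a)) % n
  conv_rhs => rw [show j.val + (b + a) = (j.val + a) + b by omega]
  simp [Nat.add_mod]

theorem rotm_n (hn : 0 < n) (e : Fin n → Fin k) : rotm hn n e = e := by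
  funext j
  simp only [rotm]
  congr 1
  apply Fin.ext
  show (j.val + n) % n = j.val
  rw [Nat.add_mod_right, Nat.mod_eq_of_lt j.isLt]

theorem rotm_mul_n (hn : 0 < n) (c : ℕ) (e : Fin n → Fin k) : rotm hn (n * c) e = e := by
  induction c with
  | zero => simpa using rotm_zero hn e
  | succ c ih =>
    rw [show n * (c+1) = n * c + n by ring, ← rotm_rotm hn n (n*c), ih, rotm_n]

theorem rotm_cancel (hn : 0 < n) (m : ℕ) (e : Fin n → Fin k) :
    rotm hn (n * (m / n + 1) - m) (rotm hn m e) = e := by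
  rw [rotm_rotm, show m + (n * (m / n + 1) - m) = n * (m / n + 1) by
    have h1 : n * (m / n) ≤ m := Nat.mul_div_le m n
    have h2 : m < n * (m / n + 1) := by
      have h3 := Nat.div_add_mod m n
      have h4 := Nat.mod_lt m hn
      nlinarith [h3, h4]
    omega]
  exact rotm_mul_n hn _ e

theorem rotm_surj (hn : 0 < n) (m : ℕ) {e : Fin n → Fin k} (he : Function.Surjective e) :
    Function.Surjective (rotm hn m e) := by
  intro y
  obtain ⟨j, hj⟩ := he y
  have h := congrFun (rotm_cancel hn m e) j
  exact ⟨_, h.trans hj⟩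

theorem shifts_rotm_one (hn : 0 < n) (e : Fin n → Fin k) : Shifts e (rotm hn 1 e) := by
  intro i h
  simp only [rotm]
  congr 1
  apply Fin.ext
  show i + 1 = (i + 1) % n
  rw [Nat.mod_eq_of_lt h]

theorem reach_rotm (hn : 0 < n) (m : ℕ) {e : Fin n → Fin k} (he : Function.Surjective e) :
    Reach ⟨e, he⟩ ⟨rotm hn m e, rotm_surj hn m he⟩ := by
  induction m with
  | zero => exact reach_of_eq (Subtype.ext (rotm_zero hn e).symm)
  | succ m ih =>
    refine ih.tail ?_
    show Shifts (rotm hn m e) (rotm hn (m+1) e)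
    have : rotm hn (m+1) e = rotm hn 1 (rotm hn m e) := (rotm_rotm hn 1 m e).symm
    rw [this]
    exact shifts_rotm_one hn _

theorem conn_rotm (hn : 0 < n) (m : ℕ) {e : Fin n → Fin k} (he : Function.Surjective e) :
    Conn ⟨e, he⟩ ⟨rotm hn m e, rotm_surj hn m he⟩ := by
  refine ⟨reach_rotm hn m he, ?_⟩
  have h := reach_rotm hn (n * (m / n + 1) - m) (rotm_surj hn m he)
  refine h.trans (reach_of_eq (Subtype.ext ?_))
  exact rotm_cancel hn m e


/-- the `t`-th window of the concatenation `w ++ w'`. -/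
def mix (hn : 0 < n) (w w' : Fin n → Fin k) (t : ℕ) : Fin n → Fin k :=
  fun j => if h : j.val + t < n then w ⟨j.val + t, h⟩
    else w' ⟨(j.val + t - n) % n, Nat.mod_lt _ hn⟩

theorem mix_zero (hn : 0 < n) (w w' : Fin n → Fin k) : mix hn w w' 0 = w := by
  funext j; simp [mix, j.isLt]

theorem mix_n (hn : 0 < n) (w w' : Fin n → Fin k) : mix hn w w' n = w' := by
  funext j
  have h1 : ¬ (j.val + n < n) := by omega
  simp only [mix, dif_neg h1]
  congr 1
  apply Fin.ext
  show (j.val + n - n) % n = j.val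
  rw [Nat.add_sub_cancel, Nat.mod_eq_of_lt j.isLt]

theorem shifts_mix (hn : 0 < n) (w w' : Fin n → Fin k) (t : ℕ) :
    Shifts (mix hn w w' t) (mix hn w w' (t+1)) := by
  intro i h
  show dite _ _ _ = dite _ _ _
  have he : i + 1 + t = i + (t + 1) := by omega
  by_cases hc : i + 1 + t < n
  · rw [dif_pos hc, dif_pos (by omega : i + (t+1) < n)]
    congr 1; exact Fin.ext he
  · rw [dif_neg hc, dif_neg (by omega : ¬ (i + (t+1) < n))]
    congr 1
    apply Fin.ext
    show (i + 1 + t - n) % n = (i + (t + 1) - n) % n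
    rw [he]

theorem mix_eq_left (hn : 0 < n) (w : Fin n → Fin k) (p : Fin n) (a : Fin k) (t : ℕ)
    (ht : t ≤ p.val) : mix hn w (Function.update w p a) t = rotm hn t w := by
  funext j
  show dite _ _ _ = _
  by_cases hc : j.val + t < n
  · rw [dif_pos hc]
    show _ = w _
    congr 1
    exact Fin.ext (Nat.mod_eq_of_lt hc).symm
  · rw [dif_neg hc]
    have hlt : j.val + t - n < n := by omega
    have hidx : (j.val + t - n) % n = j.val + t - n := Nat.mod_eq_of_lt hlt
    have hne : (⟨(j.val + t - n) % n, Nat.mod_lt _ hn⟩ : Fin n) ≠ p := by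
      apply Fin.ne_of_val_ne
      show (j.val + t - n) % n ≠ p.val
      rw [hidx]
      have : j.val + t - n < t := by omega
      omega
    rw [Function.update_of_ne hne]
    show w _ = w _
    congr 1
    apply Fin.ext
    show (j.val + t - n) % n = (j.val + t) % n
    rw [hidx, Nat.mod_eq_sub_mod (by omega), Nat.mod_eq_of_lt hlt]

theorem mix_eq_right (hn : 0 < n) (w : Fin n → Fin k) (p : Fin n) (a : Fin k) (t : ℕ)
    (ht : p.val < t) (htn : t ≤ n) :
    mix hn w (Function.update w p a) t = rotm hn t (Function.update w p a) := by
  funext j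
  show dite _ _ _ = _
  by_cases hc : j.val + t < n
  · rw [dif_pos hc]
    have hne : (⟨j.val + t, hc⟩ : Fin n) ≠ p := by
      apply Fin.ne_of_val_ne; show j.val + t ≠ p.val; omega
    show w _ = Function.update w p a _
    rw [show (⟨(j.val + t) % n, Nat.mod_lt _ hn⟩ : Fin n) = ⟨j.val + t, hc⟩ from
      Fin.ext (Nat.mod_eq_of_lt hc), Function.update_of_ne hne]
  · rw [dif_neg hc]
    show Function.update w p a _ = Function.update w p a _
    congr 1
    apply Fin.ext
    show (j.val + t - n) % n = (j.val + t) % n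
    have hlt : j.val + t - n < n := by omega
    rw [Nat.mod_eq_sub_mod (by omega : n ≤ j.val + t)]

theorem reach_update (hn : 0 < n) {w : Fin n → Fin k} (p : Fin n) (a : Fin k)
    (hw : Function.Surjective w) (hw' : Function.Surjective (Function.update w p a)) :
    Reach ⟨w, hw⟩ ⟨Function.update w p a, hw'⟩ := by
  set w' := Function.update w p a with hw'def
  have hsurj : ∀ t, t ≤ n → Function.Surjective (mix hn w w' t) := by
    intro t ht
    rcases le_or_gt t p.val with h | h
    · rw [hw'def, mix_eq_left hn w p a t h]; exact rotm_surj hn t hw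
    · rw [hw'def, mix_eq_right hn w p a t h ht]; exact rotm_surj hn t hw'
  have key : ∀ t (ht : t ≤ n), Reach ⟨w, hw⟩ ⟨mix hn w w' t, hsurj t ht⟩ := by
    intro t
    induction t with
    | zero => intro _; exact reach_of_eq (Subtype.ext (mix_zero hn w w').symm)
    | succ t ih =>
      intro ht
      exact (ih (by omega)).tail (shifts_mix hn w w' t)
  exact (key n le_rfl).trans (reach_of_eq (Subtype.ext (mix_n hn w w')))

theorem conn_update (hn : 0 < n) {w : Fin n → Fin k} (p : Fin n) (a : Fin k)
    (hw : Function.Surjective w) (hw' : Function.Surjective (Function.update w p a)) :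
    Conn ⟨w, hw⟩ ⟨Function.update w p a, hw'⟩ := by
  refine ⟨reach_update hn p a hw hw', ?_⟩
  have heq : Function.update (Function.update w p a) p (w p) = w := by
    rw [Function.update_idem, Function.update_eq_self]
  have hsurj2 : Function.Surjective (Function.update (Function.update w p a) p (w p)) := by
    rw [heq]; exact hw
  have h := reach_update hn p (w p) hw' hsurj2
  exact h.trans (reach_of_eq (Subtype.ext heq))

/-- helper: conn between two subtype elements whose values are updates of each other. -/
theorem conn_update' (hn : 0 < n) {w v : Fin n → Fin k} (p : Fin n) (a : Fin k)
    (hw : Function.Surjective w) (hv : Function.Surjective v)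
    (h : v = Function.update w p a) :
    Conn (⟨w, hw⟩ : T n k) ⟨v, hv⟩ := by
  subst h; exact conn_update hn p a hw hv

/-- push a letter at the front, dropping the last letter. -/
def pushW (hn : 0 < n) (a : Fin k) (e : Fin n → Fin k) : Fin n → Fin k :=
  Function.update (rotm hn (n-1) e) ⟨0, hn⟩ a

theorem pushW_zero (hn : 0 < n) (a : Fin k) (e : Fin n → Fin k) :
    pushW hn a e ⟨0, hn⟩ = a := Function.update_self _ _ _

theorem pushW_pos (hn : 0 < n) (a : Fin k) (e : Fin n → Fin k) (j : Fin n) (hj : 0 < j.val) :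
    pushW hn a e j = e ⟨j.val - 1, by omega⟩ := by
  have hne : j ≠ ⟨0, hn⟩ := by intro hc; rw [hc] at hj; simp at hj
  rw [pushW, Function.update_of_ne hne]
  show e _ = e _
  congr 1
  apply Fin.ext
  show (j.val + (n-1)) % n = j.val - 1
  have h1 : j.val < n := j.isLt
  rw [Nat.mod_eq_sub_mod (by omega)]
  rw [Nat.mod_eq_of_lt (by omega)]
  omega

theorem conn_push (hn : 0 < n) (a : Fin k) {e : Fin n → Fin k} (he : Function.Surjective e)
    (hp : Function.Surjective (pushW hn a e)) :
    Conn ⟨e, he⟩ ⟨pushW hn a e, hp⟩ :=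
  (conn_rotm hn (n-1) he).trans (conn_update hn ⟨0, hn⟩ a (rotm_surj hn (n-1) he) hp)

/-- Phase A: reach a word whose first `k` letters are pairwise distinct. -/
theorem phaseA (hk : 0 < k) (hkn : k < n) (e : T n k) :
    ∃ f : T n k, Conn e f ∧
      ∀ x y : Fin n, x.val < k → y.val < k → f.1 x = f.1 y → x = y := by
  have hn : 0 < n := by omega
  suffices h : ∀ i, i ≤ k → ∃ f : T n k, Conn e f ∧
      ∀ x y : Fin n, x.val < i → y.val < i → f.1 x = f.1 y → x = y by
    exact h k le_rfl
  intro i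
  induction i with
  | zero => exact fun _ => ⟨e, Conn.refl e, fun x y hx _ _ => absurd hx (by omega)⟩
  | succ i ih =>
    intro hik
    obtain ⟨f, hconn, hinj⟩ := ih (by omega)
    -- find a letter c that is pushable and not among the first i letters
    have hkey : ∃ c : Fin k, Function.Surjective (pushW hn c f.1) ∧
        ∀ x : Fin n, x.val < i → f.1 x ≠ c := by
      by_cases hcov : ∀ y : Fin k, ∃ x : Fin n, x.val < n - 1 ∧ f.1 x = y
      · -- free push: pick a letter not among the first i letters
        have himg : ∃ c : Fin k, ∀ x : Fin i, f.1 ⟨x.val, by omega⟩ ≠ c := by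
          set img : Finset (Fin k) :=
            Finset.image (fun x : Fin i => f.1 ⟨x.val, by omega⟩) Finset.univ with himgdef
          have h1 : img.card ≤ i := by
            refine le_trans Finset.card_image_le ?_
            simp
          have hcard : img.card < Fintype.card (Fin k) := by
            rw [Fintype.card_fin]; omega
          by_contra hno
          push_neg at hno
          have : img = Finset.univ := by
            apply Finset.eq_univ_iff_forall.mpr
            intro c
            obtain ⟨x, hx⟩ := hno c
            exact himgdef ▸ Finset.mem_image.mpr ⟨x, Finset.mem_univ x, hx⟩
          rw [this, Finset.card_univ] at hcard
          omega
        obtain ⟨c, hc⟩ := himg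
        refine ⟨c, ?_, ?_⟩
        · intro y
          by_cases hy : y = c
          · exact ⟨⟨0, hn⟩, by rw [pushW_zero, hy]⟩
          · obtain ⟨x, hx1, hx2⟩ := hcov y
            refine ⟨⟨x.val + 1, by omega⟩, ?_⟩
            rw [pushW_pos hn c f.1 _ (by simp)]
            simpa using hx2
        · intro x hx
          exact hc ⟨x.val, hx⟩
      · -- forced push
        push_neg at hcov
        obtain ⟨b, hb⟩ := hcov
        refine ⟨b, ?_, ?_⟩
        · intro y
          obtain ⟨x, hx⟩ := f.2 y
          by_cases hxs : x.val < n - 1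
          · refine ⟨⟨x.val + 1, by omega⟩, ?_⟩
            rw [pushW_pos hn b f.1 _ (by simp)]
            simpa using hx
          · -- x = n-1, so y = f (n-1); show y = b
            have hxv : x.val = n - 1 := by have := x.isLt; omega
            obtain ⟨z, hz1, hz2⟩ := (by
              obtain ⟨z, hz⟩ := f.2 b
              have : ¬ z.val < n - 1 := fun hc => hb z hc hz
              exact ⟨z, (by have := z.isLt; omega : z.val = n - 1), hz⟩ :
                ∃ z : Fin n, z.val = n - 1 ∧ f.1 z = b)
            have : x = z := Fin.ext (by omega)
            refine ⟨⟨0, hn⟩, ?_⟩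
            rw [pushW_zero, ← hx, this, hz2]
        · intro x hx
          exact hb x (by omega)
    obtain ⟨c, hcsurj, hcnew⟩ := hkey
    refine ⟨⟨pushW hn c f.1, hcsurj⟩, hconn.trans (conn_push hn c f.2 hcsurj), ?_⟩
    intro x y hx hy hxy
    have hxy' : pushW hn c f.1 x = pushW hn c f.1 y := hxy
    rcases Nat.eq_zero_or_pos x.val with hx0 | hx0 <;>
      rcases Nat.eq_zero_or_pos y.val with hy0 | hy0
    · exact Fin.ext (by omega)
    · exfalso
      rw [show x = ⟨0, hn⟩ from Fin.ext hx0, pushW_zero,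
        pushW_pos hn c f.1 y hy0] at hxy'
      exact hcnew ⟨y.val - 1, by omega⟩ (by show y.val - 1 < i; omega) hxy'.symm
    · exfalso
      rw [show y = ⟨0, hn⟩ from Fin.ext hy0, pushW_zero,
        pushW_pos hn c f.1 x hx0] at hxy'
      exact hcnew ⟨x.val - 1, by omega⟩ (by show x.val - 1 < i; omega) hxy'
    · rw [pushW_pos hn c f.1 x hx0, pushW_pos hn c f.1 y hy0] at hxy'
      have h5 := hinj ⟨x.val - 1, by omega⟩ ⟨y.val - 1, by omega⟩ (by show x.val - 1 < i; omega) (by show y.val - 1 < i; omega) hxy'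
      have h6 := congrArg Fin.val h5
      simp only [] at h6
      exact Fin.ext (by omega)

section PhaseBC

/-- the letter `k-1`. -/
def lastk (hk : 0 < k) : Fin k := ⟨k-1, Nat.sub_lt hk one_pos⟩

/-- the position `n-1`. -/
def lpos (hn : 0 < n) : Fin n := ⟨n-1, Nat.sub_lt hn one_pos⟩

/-- block position as word position. -/
def bpos (hkn : k < n) (x : Fin k) : Fin n := ⟨x.val, Nat.lt_trans x.isLt hkn⟩

variable (hk : 0 < k) (hkn : k < n)

theorem bpos_ne (x y : Fin k) (h : x ≠ y) : bpos hkn x ≠ bpos hkn y := by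
  intro hc
  have h2 : (bpos hkn x).val = (bpos hkn y).val := congrArg Fin.val hc
  exact h (Fin.ext h2)

theorem bpos_ne_lpos (x : Fin k) : bpos hkn x ≠ lpos (Nat.lt_of_lt_of_le hk (le_of_lt hkn)) := by
  intro hc
  have := congrArg Fin.val hc
  simp only [bpos, lpos] at this
  have := x.isLt
  omega

/-- The word with block `B` on the first `k` positions and `k-1` afterwards. -/
def emb (hk : 0 < k) (B : Fin k → Fin k) : Fin n → Fin k :=
  fun j => if h : j.val < k then B ⟨j.val, h⟩ else lastk hk

theorem emb_lt (B : Fin k → Fin k) (j : Fin n) (h : j.val < k) :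
    emb hk B j = B ⟨j.val, h⟩ := dif_pos h

theorem emb_ge (B : Fin k → Fin k) (j : Fin n) (h : k ≤ j.val) :
    emb (n := n) hk B j = lastk hk := dif_neg (by omega)

theorem emb_bpos (B : Fin k → Fin k) (x : Fin k) :
    emb hk B (bpos hkn x) = B x := by
  have h : (bpos hkn x).val < k := x.isLt
  rw [emb_lt hk B _ h]
  congr 1

theorem emb_lpos (B : Fin k → Fin k) :
    emb (n := n) hk B (lpos (Nat.lt_of_lt_of_le hk (le_of_lt hkn))) = lastk hk := by
  apply emb_ge
  show k ≤ n - 1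
  omega

include hkn in
theorem emb_surj {B : Fin k → Fin k} (hB : Function.Surjective B) :
    Function.Surjective (emb hk B : Fin n → Fin k) := by
  intro y
  obtain ⟨x, hx⟩ := hB y
  exact ⟨bpos hkn x, by rw [emb_bpos hk hkn B x, hx]⟩

/-- the canonical word 0 1 ... (k-1) (k-1) ... (k-1). -/
def cWord : Fin n → Fin k := emb hk (fun p => p)

include hkn in
theorem cWord_surj : Function.Surjective (cWord hk (n := n)) :=
  emb_surj hk hkn (Function.surjective_id)

/-- block modification used in sorting. -/
def swapB (B : Fin k → Fin k) (p q : Fin k) : Fin k → Fin k :=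
  fun x => if x = p then p else if x = q then B p else B x

theorem swapB_p (B : Fin k → Fin k) (p q : Fin k) : swapB B p q p = p := if_pos rfl

theorem swapB_q (B : Fin k → Fin k) {p q : Fin k} (h : q ≠ p) : swapB B p q q = B p := by
  rw [swapB, if_neg h, if_pos rfl]

theorem swapB_other (B : Fin k → Fin k) {p q x : Fin k} (h : x ≠ p) (h' : x ≠ q) :
    swapB B p q x = B x := by
  rw [swapB, if_neg h, if_neg h']

theorem swap_form (B : Fin k → Fin k) (p q : Fin k) (hv : B p ≠ p) (hq : B q = p) :
    swapB B p q = B ∘ (Equiv.swap p q) := by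
  have hqp : q ≠ p := fun h => hv (by rw [h] at hq; exact hq)
  funext x
  by_cases h1 : x = p
  · subst h1
    rw [swapB_p]
    simp [Equiv.swap_apply_left, hq]
  · by_cases h2 : x = q
    · subst h2
      rw [swapB_q B hqp]
      simp [Equiv.swap_apply_right]
    · rw [swapB_other B h1 h2]
      simp [Equiv.swap_apply_of_ne_of_ne h1 h2]

theorem swapB_bij {B : Fin k → Fin k} (hB : Function.Bijective B) (p q : Fin k)
    (hv : B p ≠ p) (hq : B q = p) : Function.Bijective (swapB B p q) := by
  rw [swap_form B p q hv hq]
  exact hB.comp (Equiv.swap p q).bijective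

/-- one sorting round. -/
theorem conn_sortstep {B : Fin k → Fin k} (hB : Function.Bijective B)
    (p q : Fin k) (hv : B p ≠ p) (hq : B q = p) :
    Conn (⟨emb hk B, emb_surj hk hkn hB.surjective⟩ : T n k)
      ⟨emb hk (swapB B p q), emb_surj hk hkn (swapB_bij hB p q hv hq).surjective⟩ := by
  have hn : 0 < n := Nat.lt_of_lt_of_le hk (le_of_lt hkn)
  have hpq : p ≠ q := by
    intro h
    rw [← h] at hq
    exact hv hq
  have hqp : q ≠ p := Ne.symm hpq
  have hpqhat : bpos hkn p ≠ bpos hkn q := bpos_ne hkn p q hpq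
  have hplast : bpos hkn p ≠ lpos hn := bpos_ne_lpos hk hkn p
  have hqlast : bpos hkn q ≠ lpos hn := bpos_ne_lpos hk hkn q
  -- key equality of target
  by_cases hcase : B p = lastk hk
  · -- two moves
    have hu1 : Function.Surjective (Function.update (emb (n := n) hk B) (bpos hkn p) p) := by
      intro y
      by_cases hy : y = lastk hk
      · refine ⟨lpos hn, ?_⟩
        rw [Function.update_of_ne (Ne.symm hplast), emb_lpos hk hkn B, hy]
      · obtain ⟨x, hx⟩ := hB.surjective y
        have hxp : x ≠ p := by intro h; rw [h, hcase] at hx; exact hy hx.symm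
        refine ⟨bpos hkn x, ?_⟩
        rw [Function.update_of_ne (bpos_ne hkn x p hxp), emb_bpos hk hkn B x, hx]
    have hu2eq : emb (n := n) hk (swapB B p q) =
        Function.update (Function.update (emb hk B) (bpos hkn p) p) (bpos hkn q) (lastk hk) := by
      funext j
      by_cases hjq : j = bpos hkn q
      · rw [hjq, Function.update_self, emb_bpos hk hkn _ q, swapB_q B hqp, hcase]
      · rw [Function.update_of_ne hjq]
        by_cases hjp : j = bpos hkn p
        · rw [hjp, Function.update_self, emb_bpos hk hkn _ p, swapB_p]
        · rw [Function.update_of_ne hjp]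
          by_cases hjk : j.val < k
          · rw [emb_lt hk B j hjk, emb_lt hk _ j hjk]
            have h1 : (⟨j.val, hjk⟩ : Fin k) ≠ p := by
              intro h; exact hjp (by rw [← h]; exact Fin.ext rfl)
            have h2 : (⟨j.val, hjk⟩ : Fin k) ≠ q := by
              intro h; exact hjq (by rw [← h]; exact Fin.ext rfl)
            rw [swapB_other B h1 h2]
          · rw [emb_ge hk B j (by omega), emb_ge hk _ j (by omega)]
    refine Conn.trans (conn_update' hn (bpos hkn p) p (emb_surj hk hkn hB.surjective) hu1 rfl) ?_
    exact conn_update' hn (bpos hkn q) (lastk hk) hu1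
      (emb_surj hk hkn (swapB_bij hB p q hv hq).surjective) hu2eq
  · -- four moves
    have hu1 : Function.Surjective
        (Function.update (emb (n := n) hk B) (lpos hn) (B p)) := by
      intro y
      by_cases hy : y = B p
      · exact ⟨lpos hn, by rw [Function.update_self, hy]⟩
      · obtain ⟨x, hx⟩ := hB.surjective y
        refine ⟨bpos hkn x, ?_⟩
        rw [Function.update_of_ne (bpos_ne_lpos hk hkn x), emb_bpos hk hkn B x, hx]
    have hu2 : Function.Surjective (Function.update
        (Function.update (emb (n := n) hk B) (lpos hn) (B p)) (bpos hkn p) p) := by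
      intro y
      by_cases hy : y = B p
      · refine ⟨lpos hn, ?_⟩
        rw [Function.update_of_ne (Ne.symm hplast), Function.update_self, hy]
      · by_cases hyp : y = p
        · exact ⟨bpos hkn p, by rw [Function.update_self, hyp]⟩
        · obtain ⟨x, hx⟩ := hB.surjective y
          have hxp : x ≠ p := by intro h; rw [h] at hx; exact hy hx.symm
          refine ⟨bpos hkn x, ?_⟩
          rw [Function.update_of_ne (bpos_ne hkn x p hxp),
            Function.update_of_ne (bpos_ne_lpos hk hkn x), emb_bpos hk hkn B x, hx]
    have hu3 : Function.Surjective (Function.update (Function.update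
        (Function.update (emb (n := n) hk B) (lpos hn) (B p)) (bpos hkn p) p)
        (bpos hkn q) (B p)) := by
      intro y
      by_cases hy : y = B p
      · exact ⟨bpos hkn q, by rw [Function.update_self, hy]⟩
      · by_cases hyp : y = p
        · refine ⟨bpos hkn p, ?_⟩
          rw [Function.update_of_ne hpqhat, Function.update_self, hyp]
        · obtain ⟨x, hx⟩ := hB.surjective y
          have hxp : x ≠ p := by intro h; rw [h] at hx; exact hy hx.symm
          have hxq : x ≠ q := by intro h; rw [h, hq] at hx; exact hyp hx.symm
          refine ⟨bpos hkn x, ?_⟩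
          rw [Function.update_of_ne (bpos_ne hkn x q hxq),
            Function.update_of_ne (bpos_ne hkn x p hxp),
            Function.update_of_ne (bpos_ne_lpos hk hkn x), emb_bpos hk hkn B x, hx]
    have hu4eq : emb (n := n) hk (swapB B p q) = Function.update (Function.update
        (Function.update (Function.update (emb (n := n) hk B) (lpos hn) (B p))
        (bpos hkn p) p) (bpos hkn q) (B p)) (lpos hn) (lastk hk) := by
      funext j
      by_cases hjl : j = lpos hn
      · rw [hjl, Function.update_self, emb_lpos hk hkn]
      · rw [Function.update_of_ne hjl]
        by_cases hjq : j = bpos hkn q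
        · rw [hjq, Function.update_self, emb_bpos hk hkn _ q, swapB_q B hqp]
        · rw [Function.update_of_ne hjq]
          by_cases hjp : j = bpos hkn p
          · rw [hjp, Function.update_self, emb_bpos hk hkn _ p, swapB_p]
          · rw [Function.update_of_ne hjp, Function.update_of_ne hjl]
            by_cases hjk : j.val < k
            · rw [emb_lt hk B j hjk, emb_lt hk _ j hjk]
              have h1 : (⟨j.val, hjk⟩ : Fin k) ≠ p := by
                intro h; exact hjp (by rw [← h]; exact Fin.ext rfl)
              have h2 : (⟨j.val, hjk⟩ : Fin k) ≠ q := by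
                intro h; exact hjq (by rw [← h]; exact Fin.ext rfl)
              rw [swapB_other B h1 h2]
            · rw [emb_ge hk B j (by omega), emb_ge hk _ j (by omega)]
    refine Conn.trans (conn_update' hn (lpos hn) (B p)
      (emb_surj hk hkn hB.surjective) hu1 rfl) ?_
    refine Conn.trans (conn_update' hn (bpos hkn p) p hu1 hu2 rfl) ?_
    refine Conn.trans (conn_update' hn (bpos hkn q) (B p) hu2 hu3 rfl) ?_
    exact conn_update' hn (lpos hn) (lastk hk) hu3
      (emb_surj hk hkn (swapB_bij hB p q hv hq).surjective) hu4eq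

/-- Phase C: sort the block. -/
theorem phaseC {B : Fin k → Fin k} (hB : Function.Bijective B) :
    Conn (⟨emb hk B, emb_surj hk hkn hB.surjective⟩ : T n k)
      ⟨cWord hk, cWord_surj hk hkn⟩ := by
  generalize hM : (Finset.univ.filter fun p => B p ≠ p).card = M
  induction M using Nat.strong_induction_on generalizing B with
  | _ M ih =>
    by_cases hid : ∀ p, B p = p
    · refine conn_of_eq (Subtype.ext ?_)
      show emb hk B = cWord hk
      funext j
      unfold cWord
      by_cases hjk : j.val < k
      · rw [emb_lt hk B j hjk, emb_lt hk _ j hjk, hid]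
      · rw [emb_ge hk B j (by omega), emb_ge hk _ j (by omega)]
    · push_neg at hid
      obtain ⟨p, hv⟩ := hid
      obtain ⟨q, hq⟩ := hB.surjective p
      have hB'bij := swapB_bij hB p q hv hq
      have hstep := conn_sortstep hk hkn hB p q hv hq
      have hsub : (Finset.univ.filter fun x => swapB B p q x ≠ x) ⊆
          (Finset.univ.filter fun x => B x ≠ x).erase p := by
        intro x hx
        rw [Finset.mem_filter] at hx
        rw [Finset.mem_erase, Finset.mem_filter]
        have hxp : x ≠ p := by
          intro h
          apply hx.2
          rw [h, swapB_p]
        refine ⟨hxp, Finset.mem_univ x, ?_⟩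
        by_cases h2 : x = q
        · rw [h2, hq]
          rw [h2] at hxp
          exact Ne.symm hxp
        · intro hc
          apply hx.2
          rw [swapB_other B hxp h2, hc]
      have hmem : p ∈ (Finset.univ.filter fun x => B x ≠ x) := by
        rw [Finset.mem_filter]; exact ⟨Finset.mem_univ p, hv⟩
      have hcard : (Finset.univ.filter fun x => swapB B p q x ≠ x).card < M := by
        calc (Finset.univ.filter fun x => swapB B p q x ≠ x).card
            ≤ ((Finset.univ.filter fun x => B x ≠ x).erase p).card := Finset.card_le_card hsub
          _ < (Finset.univ.filter fun x => B x ≠ x).card :=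
              Finset.card_erase_lt_of_mem hmem
          _ = M := hM
      exact Conn.trans hstep (ih _ hcard hB'bij rfl)
end PhaseBC

section PhaseB
variable (hk : 0 < k) (hkn : k < n)

/-- Phase B and assembly: every surjective word is connected to the canonical word. -/
theorem conn_to_cWord (e : T n k) : Conn e ⟨cWord hk, cWord_surj hk hkn⟩ := by
  have hn : 0 < n := Nat.lt_of_lt_of_le hk (le_of_lt hkn)
  obtain ⟨f, hconn, hinj⟩ := phaseA hk hkn e
  set B : Fin k → Fin k := fun p => f.1 (bpos hkn p) with hBdef
  have hBinj : Function.Injective B := by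
    intro x y hxy
    have h1 := hinj (bpos hkn x) (bpos hkn y) x.isLt y.isLt hxy
    have h2 : (bpos hkn x).val = (bpos hkn y).val := congrArg Fin.val h1
    exact Fin.ext h2
  have hBbij : Function.Bijective B := Finite.injective_iff_bijective.mp hBinj
  -- intermediate words
  set V : ℕ → (Fin n → Fin k) := fun m j =>
    if k ≤ j.val ∧ j.val < k + m then lastk hk else f.1 j with hVdef
  have hVsurj : ∀ m, Function.Surjective (V m) := by
    intro m y
    obtain ⟨x, hx⟩ := hBbij.surjective y
    refine ⟨bpos hkn x, ?_⟩
    have : ¬ (k ≤ (bpos hkn x).val ∧ (bpos hkn x).val < k + m) := by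
      intro hc
      have := x.isLt
      have h2 : (bpos hkn x).val = x.val := rfl
      omega
    rw [hVdef]
    simp only [this, if_false]
    exact hx
  have hV0 : V 0 = f.1 := by
    funext j
    rw [hVdef]
    simp only []
    rw [if_neg (by omega)]
  have hVstep : ∀ m (hm : k + m < n), V (m+1) = Function.update (V m) ⟨k+m, hm⟩ (lastk hk) := by
    intro m hm
    funext j
    by_cases hj : j = (⟨k+m, by omega⟩ : Fin n)
    · rw [hj, Function.update_self, hVdef]
      simp only []
      rw [if_pos (by constructor <;> simp <;> omega)]
    · rw [Function.update_of_ne hj, hVdef]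
      have hjv : j.val ≠ k + m := by
        intro hc
        exact hj (Fin.ext hc)
      simp only []
      by_cases hcond : k ≤ j.val ∧ j.val < k + m
      · rw [if_pos (by omega), if_pos hcond]
      · rw [if_neg (by omega), if_neg hcond]
  have hVconn : ∀ m, m ≤ n - k → Conn f ⟨V m, hVsurj m⟩ := by
    intro m
    induction m with
    | zero => intro _; exact conn_of_eq (Subtype.ext hV0.symm)
    | succ m ih =>
      intro hm
      refine Conn.trans (ih (by omega)) ?_
      exact conn_update' hn ⟨k+m, by omega⟩ (lastk hk) (hVsurj m) (hVsurj (m+1))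
        (hVstep m (by omega))
  have hVend : V (n - k) = emb hk B := by
    funext j
    rw [hVdef]
    simp only []
    by_cases hjk : j.val < k
    · rw [if_neg (by omega), emb_lt hk B j hjk, hBdef]
      simp only []
      congr 1
    · rw [if_pos (by constructor <;> omega), emb_ge hk B j (by omega)]
  have hfinal : Conn f ⟨emb hk B, emb_surj hk hkn hBbij.surjective⟩ := by
    have := hVconn (n - k) le_rfl
    refine Conn.trans this (conn_of_eq (Subtype.ext hVend))
  exact (hconn.trans hfinal).trans (phaseC hk hkn hBbij)

include hk hkn in
theorem reach_total (a b : T n k) : Reach a b :=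
  ((conn_to_cWord hk hkn a).1).trans ((conn_to_cWord hk hkn b).2)

end PhaseB

section Merge
variable {X : Type*} [Fintype X] [DecidableEq X]

open Equiv

theorem follow (σ : Perm X) (a b : X) (x : X) (m : ℕ)
    (h : ∀ j, j < m → (σ^j) x ≠ a ∧ (σ^j) x ≠ b) :
    ((σ * Equiv.swap a b)^m) x = (σ^m) x := by
  induction m with
  | zero => simp
  | succ m ih =>
    rw [pow_succ', pow_succ', Perm.mul_apply, Perm.mul_apply]
    rw [ih (fun j hj => h j (by omega))]
    rw [Perm.mul_apply]
    rw [Equiv.swap_apply_of_ne_of_ne (h m (by omega)).1 (h m (by omega)).2]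

theorem merge (σ : Perm X) (x0 a b : X)
    (ha : ∃ m : ℕ, (σ^m) x0 = a) (hb : ¬ ∃ m : ℕ, (σ^m) x0 = b) :
    ∀ y, ((∃ m : ℕ, (σ^m) x0 = y) ∨ y = σ b) →
      ∃ m : ℕ, (((σ * Equiv.swap a b))^m) x0 = y := by
  have hr1 : 0 < orderOf σ := orderOf_pos σ
  set r := orderOf σ with hrdef
  have hσr : σ ^ r = 1 := pow_orderOf_eq_one σ
  have hmul : ∀ (c : ℕ) (z : X), (σ ^ (r * c)) z = z := by
    intro c z
    rw [pow_mul, hσr, one_pow]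
    simp
  -- orbit of x0 is closed under σ
  have hP : ∀ y, (∃ m : ℕ, (σ^m) x0 = y) → (∃ m : ℕ, (σ^m) x0 = σ y) := by
    rintro y ⟨m, rfl⟩
    exact ⟨m + 1, by rw [pow_succ', Perm.mul_apply]⟩
  have hane : a ≠ b := by rintro rfl; exact hb ha
  -- minimal time to reach a
  have hma := Nat.find_spec ha
  set ma := Nat.find ha with hmadef
  have hma_min : ∀ j, j < ma → (σ^j) x0 ≠ a := fun j hj => Nat.find_min ha hj
  have hnotb : ∀ j : ℕ, (σ^j) x0 ≠ b := fun j hj => hb ⟨j, hj⟩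
  -- reach a by time ma under σ'
  have hA : ((σ * Equiv.swap a b)^ma) x0 = a := by
    rw [follow σ a b x0 ma (fun j hj => ⟨hma_min j hj, hnotb j⟩)]
    exact hma
  have hB : ((σ * Equiv.swap a b)^(ma+1)) x0 = σ b := by
    rw [pow_succ', Perm.mul_apply, hA, Perm.mul_apply, Equiv.swap_apply_left]
  -- σ b is not in the orbit of x0 (else b would be)
  have hfb : (σ ^ (r - 1)) (σ b) = b := by
    rw [← Perm.mul_apply, ← pow_succ, show r - 1 + 1 = r by omega, hσr]
    simp
  have hPf : ¬ (∃ m : ℕ, (σ^m) x0 = σ b) := by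
    rintro ⟨m, hm⟩
    exact hb ⟨(r - 1) + m, by rw [pow_add, Perm.mul_apply, hm]; exact hfb⟩
  -- minimal time from σ b to b
  have hbex : ∃ m : ℕ, (σ^m) (σ b) = b := ⟨r - 1, hfb⟩
  have hmb := Nat.find_spec hbex
  set mb := Nat.find hbex with hmbdef
  have hmb_min : ∀ j, j < mb → (σ^j) (σ b) ≠ b := fun j hj => Nat.find_min hbex hj
  have hnotaF : ∀ j : ℕ, (σ^j) (σ b) ≠ a := by
    intro j hj
    apply hPf
    -- σ b = σ^{r*(j+1) - j} a
    have h1 : (σ ^ (r * (j+1))) (σ b) = σ b := hmul (j+1) (σ b)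
    have h2 : r * (j + 1) = (r * (j+1) - j) + j := by
      have : j + 1 ≤ r * (j + 1) := Nat.le_mul_of_pos_left _ hr1
      omega
    rw [h2, pow_add, Perm.mul_apply, hj] at h1
    obtain ⟨m, hm⟩ := ha
    exact ⟨(r * (j+1) - j) + m, by rw [pow_add, Perm.mul_apply, hm, h1]⟩
  have hC : ((σ * Equiv.swap a b)^(mb + (ma + 1))) x0 = b := by
    rw [pow_add, Perm.mul_apply, hB]
    rw [follow σ a b (σ b) mb (fun j hj => ⟨hnotaF j, hmb_min j hj⟩)]
    exact hmb
  have hD : ((σ * Equiv.swap a b)^(mb + (ma + 1) + 1)) x0 = σ a := by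
    rw [pow_succ', Perm.mul_apply, hC, Perm.mul_apply, Equiv.swap_apply_right]
  rintro y (⟨my, hy⟩ | rfl)
  swap
  · exact ⟨ma + 1, hB⟩
  -- long route: find minimal positive j with σ^j a = y
  have hjex : ∃ j : ℕ, 0 < j ∧ (σ^j) a = y := by
    refine ⟨my + (r * (ma + 1) - ma), ?_, ?_⟩
    · have : ma + 1 ≤ r * (ma + 1) := Nat.le_mul_of_pos_left _ hr1
      omega
    · have h1 : (σ ^ (my + r * (ma+1))) x0 = y := by
        rw [pow_add, Perm.mul_apply, hmul (ma+1) x0, hy]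
      have e1 : my + (r * (ma + 1) - ma) + ma = my + r * (ma+1) := by
        have : ma + 1 ≤ r * (ma + 1) := Nat.le_mul_of_pos_left _ hr1
        omega
      rw [← hma, ← Perm.mul_apply, ← pow_add, e1]
      exact h1
  classical
  have hj := Nat.find_spec hjex
  set jy := Nat.find hjex with hjydef
  have hj_min : ∀ i, i < jy → ¬ (0 < i ∧ (σ^i) a = y) := fun i hi => Nat.find_min hjex hi
  have hjpos : 0 < jy := hj.1
  have hint : ∀ i, 0 < i → i < jy → (σ^i) a ≠ a := by
    intro i hi0 hij hc
    apply hj_min (jy - i) (by omega)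
    refine ⟨by omega, ?_⟩
    have : (σ ^ (jy - i)) ((σ ^ i) a) = y := by
      rw [← Perm.mul_apply, ← pow_add, show jy - i + i = jy by omega]
      exact hj.2
    rw [hc] at this
    exact this
  have hPa : ∀ i : ℕ, ∃ m : ℕ, (σ^m) x0 = (σ^i) a := by
    intro i
    obtain ⟨m, hm⟩ := ha
    exact ⟨i + m, by rw [pow_add, Perm.mul_apply, hm]⟩
  have hE : ((σ * Equiv.swap a b)^(jy - 1)) (σ a) = y := by
    rw [follow σ a b (σ a) (jy - 1) ?_]
    · rw [← Perm.mul_apply, ← pow_succ]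
      rw [show jy - 1 + 1 = jy by omega]
      exact hj.2
    · intro j hjlt
      constructor
      · have : (σ ^ j) (σ a) = (σ ^ (j+1)) a := by
          rw [← Perm.mul_apply, ← pow_succ]
        rw [this]
        exact hint (j+1) (by omega) (by omega)
      · intro hc
        apply hb
        have h5 := hPa (j + 1)
        have : (σ ^ j) (σ a) = (σ ^ (j+1)) a := by
          rw [← Perm.mul_apply, ← pow_succ]
        rw [this] at hc
        rw [hc] at h5
        exact h5
  exact ⟨(jy - 1) + (mb + (ma + 1) + 1), by
    rw [pow_add, Perm.mul_apply, hD]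
    exact hE⟩

end Merge

theorem exists_cycle (hk : 0 < k) (hkn : k < n) :
    ∃ σ : Equiv.Perm (T n k), (∀ e, Rel e (σ e)) ∧
      ∀ f : T n k, ∃ m : ℕ, (σ^m) ⟨cWord hk, cWord_surj hk hkn⟩ = f := by
  classical
  have hn : 0 < n := Nat.lt_of_lt_of_le hk (le_of_lt hkn)
  set x0 : T n k := ⟨cWord hk, cWord_surj hk hkn⟩ with hx0
  -- base permutation: rotation
  have hrot1 : ∀ e : Fin n → Fin k, rotm hn (n-1) (rotm hn 1 e) = e := by
    intro e
    rw [rotm_rotm, show 1 + (n-1) = n by omega, rotm_n]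
  have hrot2 : ∀ e : Fin n → Fin k, rotm hn 1 (rotm hn (n-1) e) = e := by
    intro e
    rw [rotm_rotm, show (n-1) + 1 = n by omega, rotm_n]
  set σ₀ : Equiv.Perm (T n k) :=
    { toFun := fun e => ⟨rotm hn 1 e.1, rotm_surj hn 1 e.2⟩
      invFun := fun e => ⟨rotm hn (n-1) e.1, rotm_surj hn (n-1) e.2⟩
      left_inv := fun e => Subtype.ext (hrot1 e.1)
      right_inv := fun e => Subtype.ext (hrot2 e.1) } with hσ₀
  have hval₀ : ∀ e : T n k, Rel e (σ₀ e) := fun e => shifts_rotm_one hn e.1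
  -- induction on the deficiency of the orbit of x0
  suffices H : ∀ (d : ℕ) (σ : Equiv.Perm (T n k)), (∀ e, Rel e (σ e)) →
      Fintype.card (T n k) -
        (Finset.univ.filter (fun f => ∃ m : ℕ, (σ^m) x0 = f)).card ≤ d →
      ∃ σ' : Equiv.Perm (T n k), (∀ e, Rel e (σ' e)) ∧
        ∀ f : T n k, ∃ m : ℕ, (σ'^m) x0 = f by
    obtain ⟨σ', h1, h2⟩ := H (Fintype.card (T n k)) σ₀ hval₀ (by omega)
    exact ⟨σ', h1, h2⟩
  intro d
  induction d with
  | zero =>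
    intro σ hval hd
    refine ⟨σ, hval, ?_⟩
    have hcard : (Finset.univ.filter (fun f => ∃ m : ℕ, (σ^m) x0 = f)).card =
        Fintype.card (T n k) := by
      have hle := Finset.card_filter_le (Finset.univ : Finset (T n k))
        (fun f => ∃ m : ℕ, (σ^m) x0 = f)
      rw [Finset.card_univ] at hle
      omega
    have huniv := Finset.eq_univ_of_card _ hcard
    intro f
    have : f ∈ Finset.univ.filter (fun f => ∃ m : ℕ, (σ^m) x0 = f) := by
      rw [huniv]; exact Finset.mem_univ f
    exact (Finset.mem_filter.mp this).2
  | succ d ih =>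
    intro σ hval hd
    by_cases hall : ∀ f : T n k, ∃ m : ℕ, (σ^m) x0 = f
    · exact ⟨σ, hval, hall⟩
    push_neg at hall
    obtain ⟨f₀, hf₀⟩ := hall
    have hf₀' : ¬ ∃ m : ℕ, (σ^m) x0 = f₀ := by
      rintro ⟨m, hm⟩; exact hf₀ m hm
    -- find a crossing pair
    have hcross : ∃ (e g : T n k), (∃ m : ℕ, (σ^m) x0 = e) ∧ Rel e g ∧
        ¬(∃ m : ℕ, (σ^m) x0 = g) := by
      by_contra hno
      push_neg at hno
      have hclosed : ∀ y, Reach x0 y → ∃ m : ℕ, (σ^m) x0 = y := by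
        intro y hy
        induction hy with
        | refl => exact ⟨0, rfl⟩
        | tail hr hstep ih2 => exact hno _ _ ih2 hstep
      exact hf₀' (hclosed f₀ (reach_total hk hkn x0 f₀))
    obtain ⟨e, g, he, heg, hg⟩ := hcross
    have hb : ¬ ∃ m : ℕ, (σ^m) x0 = σ⁻¹ g := by
      rintro ⟨m, hm⟩
      exact hg ⟨m+1, by rw [pow_succ', Equiv.Perm.mul_apply, hm, (show σ (σ⁻¹ g) = g from Equiv.apply_symm_apply σ g)]⟩
    have hσb : σ (σ⁻¹ g) = g := Equiv.apply_symm_apply σ g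
    set σ' := σ * Equiv.swap e (σ⁻¹ g) with hσ'
    have hval' : ∀ x : T n k, Rel x (σ' x) := by
      intro x
      by_cases hx : x = e
      · subst hx
        have : σ' x = g := by
          rw [hσ', Equiv.Perm.mul_apply, Equiv.swap_apply_left, hσb]
        rw [this]
        exact heg
      · by_cases hx2 : x = σ⁻¹ g
        · subst hx2
          have hs : σ' (σ⁻¹ g) = σ e := by
            rw [hσ', Equiv.Perm.mul_apply, Equiv.swap_apply_right]
          rw [hs]
          -- Rel (σ⁻¹ g) (σ e)
          intro i hi
          have h1 := hval (σ⁻¹ g) i hi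
          have h2 := heg i hi
          have h3 := hval e i hi
          rw [hσb] at h1
          rw [h1, ← h2, h3]
        · have : σ' x = σ x := by
            rw [hσ', Equiv.Perm.mul_apply, Equiv.swap_apply_of_ne_of_ne hx hx2]
          rw [this]
          exact hval x
    have hQ := merge σ x0 e (σ⁻¹ g) he hb
    have hsub : insert g (Finset.univ.filter (fun f => ∃ m : ℕ, (σ^m) x0 = f)) ⊆
        Finset.univ.filter (fun f => ∃ m : ℕ, (σ'^m) x0 = f) := by
      intro y hy
      rw [Finset.mem_insert] at hy
      rw [Finset.mem_filter]
      refine ⟨Finset.mem_univ y, ?_⟩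
      rcases hy with rfl | hy
      · exact hQ y (Or.inr hσb.symm)
      · exact hQ y (Or.inl (Finset.mem_filter.mp hy).2)
    have hnotmem : g ∉ Finset.univ.filter (fun f => ∃ m : ℕ, (σ^m) x0 = f) := by
      rw [Finset.mem_filter]
      rintro ⟨-, hm⟩
      exact hg hm
    have hgrow : (Finset.univ.filter (fun f => ∃ m : ℕ, (σ^m) x0 = f)).card + 1 ≤
        (Finset.univ.filter (fun f => ∃ m : ℕ, (σ'^m) x0 = f)).card := by
      calc (Finset.univ.filter (fun f => ∃ m : ℕ, (σ^m) x0 = f)).card + 1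
          = (insert g (Finset.univ.filter (fun f => ∃ m : ℕ, (σ^m) x0 = f))).card :=
            (Finset.card_insert_of_notMem hnotmem).symm
        _ ≤ _ := Finset.card_le_card hsub
    exact ih σ' hval' (by omega)

/-- forward direction: no ucycle when n < k. -/
theorem no_ucycle_lt (hnk : n < k)
    (s : ZMod (Finset.univ.filter (fun w : Fin n → Fin k => Function.Surjective w)).card → Fin k)
    (hs : IsUCycle (Finset.univ.filter (fun w : Fin n → Fin k => Function.Surjective w)) s) :
    False := by
  have h0 := hs.mapsTo (Set.mem_univ 0)
  rw [Finset.mem_coe, Finset.mem_filter] at h0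
  have := Fintype.card_le_of_surjective _ h0.2
  simp only [Fintype.card_fin] at this
  omega

theorem card_gt (hk : 3 ≤ k) :
    k < (Finset.univ.filter (fun w : Fin k → Fin k => Function.Surjective w)).card := by
  classical
  have hinj : Function.Injective
      (fun π : Equiv.Perm (Fin k) =>
        (⟨π, π.surjective⟩ : {w : Fin k → Fin k // Function.Surjective w})) := by
    intro π₁ π₂ h
    have := congrArg Subtype.val h
    exact Equiv.coe_fn_injective this
  have h1 := Fintype.card_le_of_injective _ hinj
  rw [Fintype.card_perm, Fintype.card_fin] at h1
  have h2 : Fintype.card {w : Fin k → Fin k // Function.Surjective w} =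
      (Finset.univ.filter (fun w : Fin k → Fin k => Function.Surjective w)).card :=
    Fintype.card_subtype _
  have h3 : k < k.factorial := Nat.lt_factorial_self hk
  omega

/-- forward direction: no ucycle when n = k (generalized over the modulus). -/
theorem no_ucycle_eq' (hk : 3 ≤ k) (N : ℕ) (hN : k < N) (s : ZMod N → Fin k)
    (hs : Set.BijOn (fun i : ZMod N => fun j : Fin k => s (i + ((j : ℕ) : ZMod N))) Set.univ
      ↑(Finset.univ.filter (fun w : Fin k → Fin k => Function.Surjective w))) : False := by
  haveI : NeZero N := ⟨by omega⟩
  have hwin : ∀ i : ZMod N, Function.Surjective (fun j : Fin k => s (i + ((j : ℕ) : ZMod N))) := by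
    intro i
    have := hs.mapsTo (Set.mem_univ i)
    rw [Finset.mem_coe, Finset.mem_filter] at this
    exact this.2
  have hwinj : ∀ i : ZMod N, Function.Injective (fun j : Fin k => s (i + ((j : ℕ) : ZMod N))) :=
    fun i => Finite.injective_iff_surjective.mpr (hwin i)
  have hper : ∀ i : ZMod N, s (i + (k : ZMod N)) = s i := by
    intro i
    obtain ⟨j, hj⟩ := hwin (i + 1) (s (i + ((0 : ℕ) : ZMod N)))
    simp only [] at hj
    by_cases hjk : j.val + 1 < k
    · exfalso
      have h1 : i + 1 + ((j.val : ℕ) : ZMod N) = i + (((j.val + 1 : ℕ)) : ZMod N) := by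
        push_cast
        ring
      rw [h1] at hj
      have h3 := hwinj i (a₁ := ⟨j.val + 1, hjk⟩) (a₂ := ⟨0, by omega⟩)
        (show s (i + ((j.val + 1 : ℕ) : ZMod N)) = s (i + ((0 : ℕ) : ZMod N)) from hj)
      simp only [Fin.mk.injEq] at h3
      omega
    · have hjv : j.val = k - 1 := by have := j.isLt; omega
      have hcast : ((k - 1 : ℕ) : ZMod N) + 1 = (k : ZMod N) := by
        have h5 : ((k - 1 : ℕ) : ZMod N) + ((1 : ℕ) : ZMod N) = ((k - 1 + 1 : ℕ) : ZMod N) := by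
          push_cast
          ring
        rw [show ((1:ℕ) : ZMod N) = 1 from Nat.cast_one] at h5
        rw [h5, show k - 1 + 1 = k by omega]
      have h1 : i + 1 + ((j.val : ℕ) : ZMod N) = i + (k : ZMod N) := by
        rw [hjv, ← hcast]
        ring
      rw [h1] at hj
      rw [hj]
      norm_num
  have hWeq :
      (fun j : Fin k => s (0 + (k : ZMod N) + ((j : ℕ) : ZMod N))) =
      (fun j : Fin k => s ((0 : ZMod N) + ((j : ℕ) : ZMod N))) := by
    funext j
    have h1 : (0 : ZMod N) + (k : ZMod N) + ((j.val : ℕ) : ZMod N) =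
        ((0 : ZMod N) + ((j.val : ℕ) : ZMod N)) + (k : ZMod N) := by ring
    rw [h1, hper]
  have hzero := hs.injOn (Set.mem_univ ((0 : ZMod N) + (k : ZMod N))) (Set.mem_univ 0) hWeq
  rw [zero_add] at hzero
  have hdvd : (N : ℕ) ∣ k := by
    rwa [ZMod.natCast_eq_zero_iff] at hzero
  have := Nat.le_of_dvd (by omega) hdvd
  omega

theorem ucycle_exists (hk : 0 < k) (hkn : k < n) :
    ∃ s : ZMod (Finset.univ.filter
        (fun w : Fin n → Fin k => Function.Surjective w)).card → Fin k,
      IsUCycle (Finset.univ.filter (fun w : Fin n → Fin k => Function.Surjective w)) s := by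
  classical
  have hn : 0 < n := Nat.lt_of_lt_of_le hk (le_of_lt hkn)
  obtain ⟨σ, hval, hcyc⟩ := exists_cycle hk hkn
  set x0 : T n k := ⟨cWord hk, cWord_surj hk hkn⟩ with hx0
  set N := (Finset.univ.filter (fun w : Fin n → Fin k => Function.Surjective w)).card with hN
  have hNT : Fintype.card (T n k) = N := by
    rw [Fintype.card_subtype]
  have hN0 : 0 < N := by
    rw [← hNT]
    exact Fintype.card_pos_iff.mpr ⟨x0⟩
  haveI : NeZero N := ⟨by omega⟩
  -- periodicity lemmas
  have hfix : ∀ p : ℕ, (σ^p) x0 = x0 → ∀ m : ℕ, (σ^m) x0 = (σ^(m % p)) x0 := by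
    intro p hp m
    have hc : ∀ c : ℕ, (σ^(p * c)) x0 = x0 := by
      intro c
      induction c with
      | zero => simp
      | succ c ih =>
        rw [show p * (c+1) = p * c + p by ring, pow_add, Equiv.Perm.mul_apply, hp, ih]
    conv_lhs => rw [show m = m % p + p * (m / p) by rw [Nat.mod_add_div]]
    rw [pow_add, Equiv.Perm.mul_apply, hc]
  have hfixp : ∀ p : ℕ, 0 < p → p < N → ¬ ((σ^p) x0 = x0) := by
    intro p hp0 hpN hp
    have hsurj : Function.Surjective (fun t : Fin p => (σ^(t.val)) x0) := by
      intro f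
      obtain ⟨m, hm⟩ := hcyc f
      refine ⟨⟨m % p, Nat.mod_lt _ hp0⟩, ?_⟩
      show (σ ^ (m % p)) x0 = f
      rw [← hfix p hp m, hm]
    have := Fintype.card_le_of_surjective _ hsurj
    rw [hNT, Fintype.card_fin] at this
    omega
  have hcancel : ∀ i p : ℕ, (σ^p) ((σ^i) x0) = (σ^i) x0 → (σ^p) x0 = x0 := by
    intro i p hp
    have h1 : (σ^i) ((σ^p) x0) = (σ^i) x0 := by
      rw [← Equiv.Perm.mul_apply, ← pow_add, Nat.add_comm i p, pow_add, Equiv.Perm.mul_apply, hp]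
    exact (σ^i).injective h1
  have hinj : ∀ i j : ℕ, i < N → j < N → (σ^i) x0 = (σ^j) x0 → i = j := by
    have key : ∀ i j : ℕ, i ≤ j → j < N → (σ^i) x0 = (σ^j) x0 → i = j := by
      intro i j hij hjN hconst
      by_contra hne
      have hp0 : 0 < j - i := by omega
      have h1 : (σ^(j - i)) ((σ^i) x0) = (σ^i) x0 := by
        rw [← Equiv.Perm.mul_apply, ← pow_add, show j - i + i = j by omega]
        exact hconst.symm
      exact hfixp (j - i) hp0 (by omega) (hcancel i (j - i) h1)
    intro i j hiN hjN hconst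
    rcases le_total i j with h | h
    · exact key i j h hjN hconst
    · exact (key j i h hiN hconst.symm).symm
  have hperiod : (σ^N) x0 = x0 := by
    have hlt : Fintype.card (T n k) < Fintype.card (Fin (N+1)) := by
      rw [hNT, Fintype.card_fin]; omega
    obtain ⟨x, y, hxy, hfxy⟩ := Fintype.exists_ne_map_eq_of_card_lt
      (fun t : Fin (N+1) => (σ^(t.val)) x0) hlt
    rcases Ne.lt_or_gt (fun hc : x.val = y.val => hxy (Fin.ext hc)) with hlt2 | hlt2
    all_goals {
      first
      | (have hp0 : 0 < y.val - x.val := by omega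
         have h1 : (σ^(y.val - x.val)) ((σ^(x.val)) x0) = (σ^(x.val)) x0 := by
           rw [← Equiv.Perm.mul_apply, ← pow_add, show y.val - x.val + x.val = y.val by omega]
           exact hfxy.symm
         have h2 := hcancel _ _ h1
         have hple : y.val - x.val ≤ N := by have := y.isLt; omega
         rcases Nat.lt_or_ge (y.val - x.val) N with h3 | h3
         · exact absurd h2 (hfixp _ hp0 h3)
         · rwa [show y.val - x.val = N by omega] at h2)
      | (have hp0 : 0 < x.val - y.val := by omega
         have h1 : (σ^(x.val - y.val)) ((σ^(y.val)) x0) = (σ^(y.val)) x0 := by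
           rw [← Equiv.Perm.mul_apply, ← pow_add, show x.val - y.val + y.val = x.val by omega]
           exact hfxy
         have h2 := hcancel _ _ h1
         have hple : x.val - y.val ≤ N := by have := x.isLt; omega
         rcases Nat.lt_or_ge (x.val - y.val) N with h3 | h3
         · exact absurd h2 (hfixp _ hp0 h3)
         · rwa [show x.val - y.val = N by omega] at h2)
    }
  have hmodN : ∀ m : ℕ, (σ^m) x0 = (σ^(m % N)) x0 := hfix N hperiod
  -- the ucycle
  refine ⟨fun i : ZMod N => ((σ^(i.val)) x0).1 ⟨0, hn⟩, ?_⟩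
  set s : ZMod N → Fin k := fun i => ((σ^(i.val)) x0).1 ⟨0, hn⟩ with hsdef
  have hfirst : ∀ (t : ℕ) (ht : t < n) (f : T n k), ((σ^t) f).1 ⟨0, hn⟩ = f.1 ⟨t, ht⟩ := by
    intro t
    induction t with
    | zero => intro ht f; simp
    | succ t ih =>
      intro ht f
      rw [pow_succ, Equiv.Perm.mul_apply]
      rw [ih (by omega) (σ f)]
      exact (hval f t ht).symm
  have hwindow : ∀ (i : ZMod N) (j : Fin n),
      s (i + ((j : ℕ) : ZMod N)) = ((σ^(i.val)) x0).1 j := by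
    intro i j
    have hval2 : (i + ((j : ℕ) : ZMod N)).val = (i.val + j.val) % N := by
      rw [ZMod.val_add, ZMod.val_natCast]
      exact Nat.ModEq.add_left i.val (Nat.mod_modEq j.val N)
    rw [hsdef]
    simp only []
    rw [hval2, ← hmodN, Nat.add_comm i.val j.val, pow_add, Equiv.Perm.mul_apply]
    rw [hfirst j.val j.isLt]
  have hWeq : ∀ i : ZMod N,
      (fun j : Fin n => s (i + ((j : ℕ) : ZMod N))) = ((σ^(i.val)) x0).1 := by
    intro i
    funext j
    exact hwindow i j
  refine ⟨?_, ?_, ?_⟩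
  · intro i _
    show (fun j : Fin n => s (i + ((j : ℕ) : ZMod N))) ∈ _
    rw [hWeq i, Finset.mem_coe, Finset.mem_filter]
    exact ⟨Finset.mem_univ _, ((σ^(i.val)) x0).2⟩
  · intro i _ i' _ hii
    simp only [] at hii
    rw [hWeq i, hWeq i'] at hii
    have h1 : (σ^(i.val)) x0 = (σ^(i'.val)) x0 := Subtype.ext hii
    have h2 := hinj i.val i'.val (ZMod.val_lt i) (ZMod.val_lt i') h1
    exact ZMod.val_injective N h2
  · intro w hw
    rw [Finset.mem_coe, Finset.mem_filter] at hw
    obtain ⟨m, hm⟩ := hcyc ⟨w, hw.2⟩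
    refine ⟨((m : ℕ) : ZMod N), Set.mem_univ _, ?_⟩
    show (fun j : Fin n => s (((m : ℕ) : ZMod N) + ((j : ℕ) : ZMod N))) = w
    rw [hWeq]
    rw [ZMod.val_natCast, ← hmodN, hm]

end UC

/-- For `k ≥ 3` and `n ≥ 1`, a U-cycle for the surjective `n`-letter words over a
`k`-letter alphabet exists if and only if `n > k`. -/
theorem exists_ucycle_surjective_iff (n k : ℕ) (hk : 3 ≤ k) (hn : 1 ≤ n) :
    (∃ s : ZMod (Finset.univ.filter
        (fun w : Fin n → Fin k => Function.Surjective w)).card → Fin k,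
      IsUCycle (Finset.univ.filter (fun w : Fin n → Fin k => Function.Surjective w)) s) ↔
    n > k := by
  constructor
  · rintro ⟨s, hs⟩
    by_contra hng
    push_neg at hng
    rcases Nat.lt_or_ge n k with hlt | hge
    · exact UC.no_ucycle_lt hlt s hs
    · have heq : n = k := by omega
      subst heq
      exact UC.no_ucycle_eq' hk _ (UC.card_gt hk) s hs
  · intro h
    exact UC.ucycle_exists (by omega) h
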